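/- Every morphism of Frobenius monoids in a monoidal category is an isomorphism. Concretely, if R and R' are Frobenius monoids and γ : R → R' is simultaneously a monoid morphism and a comonoid morphism, then γ is invertible, with inverse (ε ⊗ R) ∘ (R ⊗ μ') ∘ (R ⊗ γ ⊗ R') ∘ (δ ⊗ R') ∘ (η ⊗ R') (up to associativity coherence). -/

import Mathlib

open CategoryTheory MonoidalCategory

/-- A Frobenius monoid in a monoidal category. -/
structure FrobMon (M : Type*) [Category M] [MonoidalCategory M] where
  R : Mon M
  δ : R.X ⟶ R.X ⊗ R.X
  ε : R.X ⟶ 𝟙_ M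
  coassoc : δ ≫ (δ ⊗ₘ 𝟙 R.X) ≫ (α_ R.X R.X R.X).hom = δ ≫ (𝟙 R.X ⊗ₘ δ)
  counit_left : δ ≫ (ε ⊗ₘ 𝟙 R.X) = (λ_ R.X).inv
  counit_right : δ ≫ (𝟙 R.X ⊗ₘ ε) = (ρ_ R.X).inv
  frob_left : (𝟙 R.X ⊗ₘ δ) ≫ (α_ R.X R.X R.X).inv ≫ (R.mon.mul ⊗ₘ 𝟙 R.X) = R.mon.mul ≫ δ
  frob_right : (δ ⊗ₘ 𝟙 R.X) ≫ (α_ R.X R.X R.X).hom ≫ (𝟙 R.X ⊗ₘ R.mon.mul) = R.mon.mul ≫ δ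

variable {M : Type*} [Category M] [MonoidalCategory M]

/-- The Frobenius "snake" identity, in whiskering form. -/
theorem frobMon_snake (S : FrobMon M) :
    (λ_ S.R.X).inv ≫ S.R.mon.one ▷ S.R.X ≫ S.δ ▷ S.R.X ≫ (α_ S.R.X S.R.X S.R.X).hom ≫
      S.R.X ◁ S.R.mon.mul ≫ S.R.X ◁ S.ε ≫ (ρ_ S.R.X).hom = 𝟙 S.R.X := by
  have fr := S.frob_right
  have cr := S.counit_right
  simp only [tensorHom_id, id_tensorHom] at fr cr
  slice_lhs 3 5 => rw [fr]
  slice_lhs 2 3 => rw [MonObj.one_mul]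
  slice_lhs 1 2 => rw [Iso.inv_hom_id]
  slice_lhs 2 3 => rw [cr]
  simp

theorem frobMon_hom_inv (S S' : FrobMon M) (γ : S.R.X ⟶ S'.R.X)
    (hmul : (γ ⊗ₘ γ) ≫ S'.R.mon.mul = S.R.mon.mul ≫ γ)
    (hcounit : γ ≫ S'.ε = S.ε) :
    γ ≫
        ((λ_ S'.R.X).inv ≫ (S.R.mon.one ⊗ₘ 𝟙 S'.R.X) ≫ (S.δ ⊗ₘ 𝟙 S'.R.X) ≫
          (α_ S.R.X S.R.X S'.R.X).hom ≫ (𝟙 S.R.X ⊗ₘ (γ ⊗ₘ 𝟙 S'.R.X)) ≫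
          (𝟙 S.R.X ⊗ₘ S'.R.mon.mul) ≫ (𝟙 S.R.X ⊗ₘ S'.ε) ≫ (ρ_ S.R.X).hom) = 𝟙 S.R.X := by
  simp only [tensorHom_id, id_tensorHom]
  slice_lhs 1 2 => rw [leftUnitor_inv_naturality]
  slice_lhs 2 3 => rw [whisker_exchange]
  slice_lhs 3 4 => rw [whisker_exchange]
  slice_lhs 4 5 => rw [associator_naturality_right]
  slice_lhs 5 6 => rw [← MonoidalCategory.whiskerLeft_comp, ← tensorHom_def']
  slice_lhs 5 6 => rw [← MonoidalCategory.whiskerLeft_comp, hmul,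
    MonoidalCategory.whiskerLeft_comp]
  slice_lhs 6 7 => rw [← MonoidalCategory.whiskerLeft_comp, hcounit]
  exact frobMon_snake S

theorem frobMon_inv_hom (S S' : FrobMon M) (γ : S.R.X ⟶ S'.R.X)
    (hone : S.R.mon.one ≫ γ = S'.R.mon.one)
    (hcomul : γ ≫ S'.δ = S.δ ≫ (γ ⊗ₘ γ)) :
    ((λ_ S'.R.X).inv ≫ (S.R.mon.one ⊗ₘ 𝟙 S'.R.X) ≫ (S.δ ⊗ₘ 𝟙 S'.R.X) ≫
          (α_ S.R.X S.R.X S'.R.X).hom ≫ (𝟙 S.R.X ⊗ₘ (γ ⊗ₘ 𝟙 S'.R.X)) ≫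
          (𝟙 S.R.X ⊗ₘ S'.R.mon.mul) ≫ (𝟙 S.R.X ⊗ₘ S'.ε) ≫ (ρ_ S.R.X).hom) ≫ γ = 𝟙 S'.R.X := by
  simp only [tensorHom_id, id_tensorHom, Category.assoc]
  slice_lhs 8 9 => rw [← rightUnitor_naturality]
  slice_lhs 7 8 => rw [whisker_exchange]
  slice_lhs 6 7 => rw [whisker_exchange]
  slice_lhs 5 6 => rw [whisker_exchange]
  slice_lhs 4 5 => rw [← associator_naturality_left]
  slice_lhs 5 6 => rw [← associator_naturality_middle]
  slice_lhs 4 5 => rw [← comp_whiskerRight, ← MonoidalCategory.tensorHom_def]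
  slice_lhs 3 4 => rw [← comp_whiskerRight, ← hcomul, comp_whiskerRight]
  slice_lhs 2 3 => rw [← comp_whiskerRight, hone]
  simp only [Category.assoc]
  exact frobMon_snake S'

/-- Every morphism of Frobenius monoids (a map which is simultaneously a monoid and a
comonoid morphism) is an isomorphism, with the explicit two-sided inverse
`(R ⊗ ε') ∘ (R ⊗ μ') ∘ (R ⊗ γ ⊗ R') ∘ (δ ⊗ R') ∘ (η ⊗ R')` (with coherence inserted). -/
theorem frobMon_hom_isIso (S S' : FrobMon M) (γ : S.R.X ⟶ S'.R.X)
    (hmul : (γ ⊗ₘ γ) ≫ S'.R.mon.mul = S.R.mon.mul ≫ γ)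
    (hone : S.R.mon.one ≫ γ = S'.R.mon.one)
    (hcomul : γ ≫ S'.δ = S.δ ≫ (γ ⊗ₘ γ))
    (hcounit : γ ≫ S'.ε = S.ε) :
    IsIso γ ∧
    (γ ≫
        ((λ_ S'.R.X).inv ≫ (S.R.mon.one ⊗ₘ 𝟙 S'.R.X) ≫ (S.δ ⊗ₘ 𝟙 S'.R.X) ≫
          (α_ S.R.X S.R.X S'.R.X).hom ≫ (𝟙 S.R.X ⊗ₘ (γ ⊗ₘ 𝟙 S'.R.X)) ≫
          (𝟙 S.R.X ⊗ₘ S'.R.mon.mul) ≫ (𝟙 S.R.X ⊗ₘ S'.ε) ≫ (ρ_ S.R.X).hom) = 𝟙 S.R.X) ∧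
    (((λ_ S'.R.X).inv ≫ (S.R.mon.one ⊗ₘ 𝟙 S'.R.X) ≫ (S.δ ⊗ₘ 𝟙 S'.R.X) ≫
          (α_ S.R.X S.R.X S'.R.X).hom ≫ (𝟙 S.R.X ⊗ₘ (γ ⊗ₘ 𝟙 S'.R.X)) ≫
          (𝟙 S.R.X ⊗ₘ S'.R.mon.mul) ≫ (𝟙 S.R.X ⊗ₘ S'.ε) ≫ (ρ_ S.R.X).hom) ≫ γ = 𝟙 S'.R.X) :=
  ⟨⟨⟨_, frobMon_hom_inv S S' γ hmul hcounit, frobMon_inv_hom S S' γ hone hcomul⟩⟩,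
    frobMon_hom_inv S S' γ hmul hcounit, frobMon_inv_hom S S' γ hone hcomul⟩
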